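/- arXiv:2202.08711 — 3 statements merged into one kernel-verified Lean document; each statement's English description precedes it below -/
import Mathlib

section
/- Let C ⊂ ℝⁿ be a nonempty compact convex set and f : ℝⁿ → ℝ be convex and differentiable with L-Lipschitz gradient. If x₀ ∈ C and for each t, x_{t+1} = (1-γ_t) x_t + γ_t v_t where v_t ∈ argmin_{v ∈ C} ⟨v, ∇f(x_t)⟩ and γ_t = 2/(t+2), then for all t ≥ 1, f(x_t) - min_C f ≤ 2 L (diam C)² / (t+2). -/
open scoped RealInnerProductSpace

open scoped RealInnerProductSpace
open Set

section aux
variable {E : Type*} [NormedAddCommGroup E] [InnerProductSpace ℝ E] [CompleteSpace E]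

lemma fw_line_hasDerivAt (f : E → ℝ) (g : E → E)
    (hgrad : ∀ z, HasGradientAt f (g z) z) (x y : E) (θ : ℝ) :
    HasDerivAt (fun s : ℝ => f (x + s • (y - x))) ⟪g (x + θ • (y - x)), y - x⟫ θ := by
  have hc : HasDerivAt (fun s : ℝ => x + s • (y - x)) (y - x) θ := by
    simpa using ((hasDerivAt_id θ).smul_const (y - x)).const_add x
  have h := (hgrad (x + θ • (y - x))).hasFDerivAt.comp_hasDerivAt θ hc
  simpa [InnerProductSpace.toDual_apply_apply, Function.comp_def] using h

lemma fw_grad_convex_ineq (f : E → ℝ) (g : E → E)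
    (hconv : ConvexOn ℝ Set.univ f) (hgrad : ∀ z, HasGradientAt f (g z) z) (x y : E) :
    f x + ⟪g x, y - x⟫ ≤ f y := by
  set φ : ℝ → ℝ := fun s => f (x + s • (y - x)) with hφdef
  have hφconv : ConvexOn ℝ Set.univ φ := by
    have h := hconv.comp_affineMap (AffineMap.lineMap x y)
    have he : ∀ s : ℝ, AffineMap.lineMap x y s = x + s • (y - x) := fun s => by
      rw [AffineMap.lineMap_apply_module]; module
    refine ⟨convex_univ, fun p _ q _ a b ha hb hab => ?_⟩
    have := h.2 (x := p) (y := q) trivial trivial ha hb hab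
    simpa [φ, Function.comp, he] using this
  have hd : HasDerivAt φ ⟪g x, y - x⟫ 0 := by
    simpa using fw_line_hasDerivAt f g hgrad x y 0
  have := hφconv.le_slope_of_hasDerivAt (Set.mem_univ 0) (Set.mem_univ 1) one_pos hd
  have hs : slope φ 0 1 = f y - f x := by
    simp [slope_def_field, φ]
  rw [hs] at this
  linarith

lemma fw_descent (f : E → ℝ) (g : E → E)
    (hgrad : ∀ z, HasGradientAt f (g z) z)
    (L : ℝ) (hL : 0 ≤ L) (hlip : ∀ a b, ‖g a - g b‖ ≤ L * ‖a - b‖) (x y : E) :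
    f y ≤ f x + ⟪g x, y - x⟫ + L / 2 * ‖y - x‖ ^ 2 := by
  set χ : ℝ → ℝ := fun s =>
    f (x + s • (y - x)) - s * ⟪g x, y - x⟫ - L / 2 * s ^ 2 * ‖y - x‖ ^ 2 with hχdef
  have hχ : ∀ θ : ℝ, HasDerivAt χ
      (⟪g (x + θ • (y - x)), y - x⟫ - ⟪g x, y - x⟫ - L * θ * ‖y - x‖ ^ 2) θ := by
    intro θ
    have h1 := fw_line_hasDerivAt f g hgrad x y θ
    have h2 : HasDerivAt (fun s : ℝ => s * ⟪g x, y - x⟫) ⟪g x, y - x⟫ θ := by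
      simpa using (hasDerivAt_id θ).mul_const ⟪g x, y - x⟫
    have h3 : HasDerivAt (fun s : ℝ => L / 2 * s ^ 2 * ‖y - x‖ ^ 2)
        (L * θ * ‖y - x‖ ^ 2) θ := by
      have : HasDerivAt (fun s : ℝ => L / 2 * s ^ 2 * ‖y - x‖ ^ 2) _ θ :=
        (((hasDerivAt_id θ).pow 2).const_mul (L / 2)).mul_const (‖y - x‖ ^ 2)
      convert this using 1
      simp only [id_eq]
      push_cast
      ring
    exact (h1.sub h2).sub h3
  have hdiff : Differentiable ℝ χ := fun θ => (hχ θ).differentiableAt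
  have hanti : AntitoneOn χ (Icc (0:ℝ) 1) := by
    apply antitoneOn_of_deriv_nonpos (convex_Icc 0 1) hdiff.continuous.continuousOn
      hdiff.differentiableOn
    intro θ hθ
    rw [interior_Icc] at hθ
    rw [(hχ θ).deriv]
    have hb : ⟪g (x + θ • (y - x)) - g x, y - x⟫ ≤ L * θ * ‖y - x‖ ^ 2 := by
      calc ⟪g (x + θ • (y - x)) - g x, y - x⟫ ≤ ‖g (x + θ • (y - x)) - g x‖ * ‖y - x‖ :=
            real_inner_le_norm _ _
        _ ≤ (L * ‖(x + θ • (y - x)) - x‖) * ‖y - x‖ := by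
            apply mul_le_mul_of_nonneg_right (hlip _ _) (norm_nonneg _)
        _ = L * θ * ‖y - x‖ ^ 2 := by
            rw [add_sub_cancel_left, norm_smul, Real.norm_eq_abs, abs_of_pos hθ.1]
            ring
    rw [inner_sub_left] at hb
    linarith
  have h01 : χ 1 ≤ χ 0 := hanti (left_mem_Icc.2 zero_le_one) (right_mem_Icc.2 zero_le_one)
    zero_le_one
  simp only [hχdef, one_smul, zero_smul, add_zero, one_pow, one_mul, zero_mul, zero_pow,
    mul_zero, sub_zero, add_sub_cancel] at h01
  linarith

end aux


theorem frank_wolfe_open_loop_rate {n : ℕ}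
    (C : Set (EuclideanSpace ℝ (Fin n))) (hCne : C.Nonempty)
    (hCcomp : IsCompact C) (hCconv : Convex ℝ C)
    (f : EuclideanSpace ℝ (Fin n) → ℝ)
    (g : EuclideanSpace ℝ (Fin n) → EuclideanSpace ℝ (Fin n))
    (hfconv : ConvexOn ℝ Set.univ f)
    (hgrad : ∀ x, HasGradientAt f (g x) x)
    (L : ℝ) (hL : 0 < L)
    (hlip : ∀ x y, ‖g x - g y‖ ≤ L * ‖x - y‖)
    (x v : ℕ → EuclideanSpace ℝ (Fin n))
    (hx0 : x 0 ∈ C)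
    (hv : ∀ t, v t ∈ C ∧ ∀ w ∈ C, ⟪v t, g (x t)⟫ ≤ ⟪w, g (x t)⟫)
    (hstep : ∀ t : ℕ,
      x (t + 1) = (1 - 2 / ((t : ℝ) + 2)) • x t + (2 / ((t : ℝ) + 2)) • v t) :
    ∀ t : ℕ, 1 ≤ t →
      f (x t) - sInf (f '' C) ≤ 2 * L * (Metric.diam C) ^ 2 / ((t : ℝ) + 2) := by
  have hdf : Differentiable ℝ f := fun z => (hgrad z).hasFDerivAt.differentiableAt
  obtain ⟨xs, hxsC, hxsmin⟩ := hCcomp.exists_isMinOn hCne hdf.continuous.continuousOn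
  have hinf : sInf (f '' C) = f xs := by
    apply IsLeast.csInf_eq
    exact ⟨⟨xs, hxsC, rfl⟩, by rintro b ⟨w, hw, rfl⟩; exact hxsmin hw⟩
  set D := Metric.diam C with hDdef
  have hD0 : 0 ≤ D := Metric.diam_nonneg
  have hA : 0 ≤ L * D ^ 2 := by positivity
  have hxC : ∀ t, x t ∈ C := by
    intro t; induction t with
    | zero => exact hx0
    | succ t ih =>
      rw [hstep t]
      have ht2 : (0:ℝ) < (t:ℝ) + 2 := by positivity
      have hγ0 : (0:ℝ) ≤ 2 / ((t:ℝ) + 2) := by positivity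
      have hγ1 : 2 / ((t:ℝ) + 2) ≤ 1 := by
        rw [div_le_one ht2]; linarith [Nat.cast_nonneg (α := ℝ) t]
      exact hCconv ih (hv t).1 (by linarith) hγ0 (by ring)
  have hrec : ∀ t : ℕ, f (x (t+1)) - f xs ≤
      (1 - 2 / ((t:ℝ) + 2)) * (f (x t) - f xs)
        + (2 / ((t:ℝ) + 2)) ^ 2 * (L * D ^ 2 / 2) := by
    intro t
    set γ : ℝ := 2 / ((t:ℝ) + 2) with hγdef
    have ht2 : (0:ℝ) < (t:ℝ) + 2 := by positivity
    have hγ0 : 0 ≤ γ := by positivity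
    have hdiffv : x (t+1) - x t = γ • (v t - x t) := by
      rw [hstep t]; module
    have hdesc := fw_descent f g hgrad L hL.le hlip (x t) (x (t+1))
    rw [hdiffv] at hdesc
    have hinner : ⟪g (x t), γ • (v t - x t)⟫ = γ * ⟪g (x t), v t - x t⟫ :=
      real_inner_smul_right _ _ _
    have hnorm : ‖γ • (v t - x t)‖ ^ 2 = γ ^ 2 * ‖v t - x t‖ ^ 2 := by
      rw [norm_smul, Real.norm_eq_abs, abs_of_nonneg hγ0, mul_pow]
    have hgap : ⟪g (x t), v t - x t⟫ ≤ f xs - f (x t) := by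
      have h1 := (hv t).2 xs hxsC
      have h2 := fw_grad_convex_ineq f g hfconv hgrad (x t) xs
      have e1 : ⟪g (x t), v t - x t⟫ = ⟪v t, g (x t)⟫ - ⟪x t, g (x t)⟫ := by
        rw [inner_sub_right, real_inner_comm (g (x t)) (v t), real_inner_comm (g (x t)) (x t)]
      have e2 : ⟪g (x t), xs - x t⟫ = ⟪xs, g (x t)⟫ - ⟪x t, g (x t)⟫ := by
        rw [inner_sub_right, real_inner_comm (g (x t)) xs, real_inner_comm (g (x t)) (x t)]
      rw [e1]; rw [e2] at h2; linarith
    have hdiam : ‖v t - x t‖ ≤ D := by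
      rw [← dist_eq_norm]
      exact Metric.dist_le_diam_of_mem hCcomp.isBounded (hv t).1 (hxC t)
    have hn2 : ‖v t - x t‖ ^ 2 ≤ D ^ 2 := by nlinarith [norm_nonneg (v t - x t)]
    rw [hinner, hnorm] at hdesc
    have hmul1 : γ * ⟪g (x t), v t - x t⟫ ≤ γ * (f xs - f (x t)) :=
      mul_le_mul_of_nonneg_left hgap hγ0
    have hmul2 : L / 2 * (γ ^ 2 * ‖v t - x t‖ ^ 2) ≤ L / 2 * (γ ^ 2 * D ^ 2) := by
      have : γ ^ 2 * ‖v t - x t‖ ^ 2 ≤ γ ^ 2 * D ^ 2 :=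
        mul_le_mul_of_nonneg_left hn2 (by positivity)
      exact mul_le_mul_of_nonneg_left this (by positivity)
    nlinarith [hmul1, hmul2]
  have key : ∀ t : ℕ, 1 ≤ t → f (x t) - f xs ≤ 2 * L * D ^ 2 / ((t:ℝ) + 2) := by
    intro t ht
    induction t, ht using Nat.le_induction with
    | base =>
      have h0 := hrec 0
      norm_num at h0 ⊢
      nlinarith
    | succ t ht ih =>
      have s0 : (0:ℝ) ≤ (t:ℝ) := Nat.cast_nonneg t
      set s : ℝ := (t:ℝ) with hsdef
      have hs2 : (0:ℝ) < s + 2 := by positivity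
      have hγ1 : 2 / (s + 2) ≤ 1 := by rw [div_le_one hs2]; linarith
      have h1 := hrec t
      have h2 : (1 - 2 / (s + 2)) * (f (x t) - f xs)
          ≤ (1 - 2 / (s + 2)) * (2 * L * D ^ 2 / (s + 2)) :=
        mul_le_mul_of_nonneg_left ih (by linarith)
      have heq : (1 - 2 / (s + 2)) * (2 * L * D ^ 2 / (s + 2))
          + (2 / (s + 2)) ^ 2 * (L * D ^ 2 / 2)
          = 2 * (L * D ^ 2) * (s + 1) / ((s + 2) ^ 2) := by
        field_simp; ring
      have hfin : 2 * (L * D ^ 2) * (s + 1) / ((s + 2) ^ 2) ≤ 2 * L * D ^ 2 / (s + 3) := by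
        rw [div_le_div_iff₀ (by positivity) (by positivity)]
        nlinarith
      have hcast : ((t + 1 : ℕ) : ℝ) + 2 = s + 3 := by push_cast; ring
      rw [hcast]
      linarith [h1, h2, heq ▸ hfin]
  intro t ht
  rw [hinf]
  exact key t ht
end

section
/- In ℝ², define B₀ = (-1/4, 3/4), C₀ = (1/4, 3/4), and recursively B_{k+1} = (-1/4, (3/5)·⟨C_k, e₂⟩), C_{k+1} = (1/4, (3/5)·⟨B_k, e₂⟩). Then for all k ∈ ℕ, the points C_k, B_{k+1}, and (-1, 0) are collinear, and the points B_k, C_{k+1}, and (1, 0) are collinear. -/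
theorem sketch_alignment (B C : ℕ → ℝ × ℝ)
    (hB0 : B 0 = (-1/4, 3/4)) (hC0 : C 0 = (1/4, 3/4))
    (hB : ∀ k, B (k + 1) = (-1/4, (3/5) * (C k).2))
    (hC : ∀ k, C (k + 1) = (1/4, (3/5) * (B k).2)) :
    ∀ k : ℕ,
      Collinear ℝ {C k, B (k + 1), ((-1 : ℝ), (0 : ℝ))} ∧
      Collinear ℝ {B k, C (k + 1), ((1 : ℝ), (0 : ℝ))} := by
  have heq : ∀ k, (B k).2 = (C k).2 := by
    intro k
    induction k with
    | zero => rw [hB0, hC0]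
    | succ n ih => rw [hB n, hC n, ih]
  have hB1 : ∀ k, (B k).1 = -1/4 := by
    intro k
    cases k with
    | zero => rw [hB0]
    | succ n => rw [hB n]
  have hC1 : ∀ k, (C k).1 = 1/4 := by
    intro k
    cases k with
    | zero => rw [hC0]
    | succ n => rw [hC n]
  intro k
  constructor
  · have hmem : B (k + 1) ∈ line[ℝ, C k, ((-1 : ℝ), (0 : ℝ))] := by
      have : B (k + 1) = AffineMap.lineMap (C k) ((-1 : ℝ), (0 : ℝ)) (2/5 : ℝ) := by
        rw [hB k]
        apply Prod.ext
        · simp [AffineMap.lineMap_apply, hC1 k]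
          ring
        · simp [AffineMap.lineMap_apply]
          ring
      rw [this]
      exact AffineMap.lineMap_mem_affineSpan_pair _ _ _
    have h := collinear_insert_of_mem_affineSpan_pair hmem
    have hset : ({C k, B (k + 1), ((-1 : ℝ), (0 : ℝ))} : Set (ℝ × ℝ)) =
        {B (k + 1), C k, ((-1 : ℝ), (0 : ℝ))} := Set.insert_comm _ _ _
    rwa [hset]
  · have hmem : C (k + 1) ∈ line[ℝ, B k, ((1 : ℝ), (0 : ℝ))] := by
      have : C (k + 1) = AffineMap.lineMap (B k) ((1 : ℝ), (0 : ℝ)) (2/5 : ℝ) := by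
        rw [hC k]
        apply Prod.ext
        · simp [AffineMap.lineMap_apply, hB1 k]
          ring
        · simp [AffineMap.lineMap_apply]
          ring
      rw [this]
      exact AffineMap.lineMap_mem_affineSpan_pair _ _ _
    have h := collinear_insert_of_mem_affineSpan_pair hmem
    have hset : ({B k, C (k + 1), ((1 : ℝ), (0 : ℝ))} : Set (ℝ × ℝ)) =
        {C (k + 1), B k, ((1 : ℝ), (0 : ℝ))} := Set.insert_comm _ _ _
    rwa [hset]
end

section
/- In ℝ², let C = conv{(-2, 1/4), (-1, 0), (0, 1), (1, 0)} and let (γ_t) be the open-loop step size γ_t = 2/(t+2). Define B₀ = (0,1), B₁ = (-2, 1/4), V₁ = (1,0), B_{k+1} = (1-γ_k)B_k + γ_k V_k, and V_{k+1} = -V_k if |⟨B_{k+1},e₁⟩| > 1/4 and |⟨B_k,e₁⟩| ≤ 1/4, else V_{k+1} = V_k (with V₀ = (-2,1/4)). Then the sets {k : ⟨B_k,e₁⟩ ≤ -1/4} and {k : ⟨B_k,e₁⟩ ≥ 1/4} are both infinite, hence (B_k) does not converge. -/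
open scoped Classical

private lemma main_escape (x v : ℕ → ℝ)
    (hrec : ∀ k : ℕ, 1 ≤ k →
      x (k+1) = (1 - 2/((k:ℝ)+2)) * x k + (2/((k:ℝ)+2)) * v k)
    (hv : ∀ k : ℕ, 1 ≤ k →
      v (k+1) = if 1/4 < |x (k+1)| ∧ |x k| ≤ 1/4 then -v k else v k)
    (k : ℕ) (hk : 3 ≤ k) (hvk : v k = 1) (hx2 : -2 ≤ x k) (hxk : x k ≤ 1/4) :
    ∃ m, k < m ∧ v m = -1 ∧ 1/4 ≤ x m ∧ x m ≤ 2 := by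
  have hkR : (3:ℝ) ≤ (k:ℝ) := by exact_mod_cast hk
  -- persistence: as long as x stays ≤ 1/4, v stays 1 and we have a closed form
  have pers : ∀ m, k ≤ m → (∀ j, k ≤ j → j ≤ m → x j ≤ 1/4) →
      v m = 1 ∧ (1 - x m) * ((m:ℝ) * ((m:ℝ)+1)) = (1 - x k) * ((k:ℝ) * ((k:ℝ)+1)) := by
    intro m hm
    induction m, hm using Nat.le_induction with
    | base => intro _; exact ⟨hvk, rfl⟩
    | succ m hm IH =>
      intro hgood
      obtain ⟨hvm, heq⟩ := IH (fun j hj hj' => hgood j hj (hj'.trans (Nat.le_succ m)))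
      have hm1 : 1 ≤ m := by omega
      have hmR : (3:ℝ) ≤ (m:ℝ) := le_trans hkR (by exact_mod_cast hm)
      have hxm : x m ≤ 1/4 := hgood m hm (Nat.le_succ m)
      have hxm1 : x (m+1) ≤ 1/4 := hgood (m+1) (le_trans hm (Nat.le_succ m)) le_rfl
      have hd : (0:ℝ) < (m:ℝ) + 2 := by linarith
      have hrm := hrec m hm1
      rw [hvm] at hrm
      have hstep : x (m+1) * ((m:ℝ)+2) = (m:ℝ) * x m + 2 := by
        rw [hrm]; field_simp; try ring
      have hmono : x m ≤ x (m+1) := by nlinarith [hstep, hd, hxm]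
      constructor
      · rw [hv m hm1, hvm]
        split_ifs with hcond
        · exfalso
          obtain ⟨h1, h2⟩ := hcond
          have ha : -(1/4) ≤ x m := (abs_le.mp h2).1
          have hb : |x (m+1)| ≤ 1/4 := abs_le.mpr ⟨le_trans ha hmono, hxm1⟩
          linarith
        · rfl
      · push_cast
        linear_combination heq - ((m:ℝ)+1) * hstep
  -- there is an exit time
  have hex : ∃ m, k ≤ m ∧ 1/4 < x m := by
    by_contra hcon
    push_neg at hcon
    have hkM : k ≤ 4 * k * (k+1) := by nlinarith
    obtain ⟨_, heqM⟩ := pers (4 * k * (k+1)) hkM (fun j hj _ => hcon j hj)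
    have hMR : ((4 * k * (k+1) : ℕ) : ℝ) = 4*(k:ℝ)*((k:ℝ)+1) := by push_cast; ring
    rw [hMR] at heqM
    have ht : (12:ℝ) ≤ (k:ℝ)*((k:ℝ)+1) := by nlinarith
    have hxM : x (4 * k * (k+1)) ≤ 1/4 := hcon _ hkM
    have hK0 : (0:ℝ) < (k:ℝ) := by linarith
    have hpos : (0:ℝ) ≤ 4*(k:ℝ)*((k:ℝ)+1)*(4*(k:ℝ)*((k:ℝ)+1)+1) := by nlinarith
    have key : (3:ℝ)/4 * (4*(k:ℝ)*((k:ℝ)+1)*(4*(k:ℝ)*((k:ℝ)+1)+1)) ≤ 3 * ((k:ℝ)*((k:ℝ)+1)) := by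
      calc (3:ℝ)/4 * (4*(k:ℝ)*((k:ℝ)+1)*(4*(k:ℝ)*((k:ℝ)+1)+1))
          ≤ (1 - x (4*k*(k+1))) * (4*(k:ℝ)*((k:ℝ)+1)*(4*(k:ℝ)*((k:ℝ)+1)+1)) :=
            mul_le_mul_of_nonneg_right (by linarith) hpos
        _ = (1 - x k) * ((k:ℝ)*((k:ℝ)+1)) := heqM
        _ ≤ 3 * ((k:ℝ)*((k:ℝ)+1)) := mul_le_mul_of_nonneg_right (by linarith) (by nlinarith)
    nlinarith [key, ht, mul_pos hK0 (show (0:ℝ) < (k:ℝ)+1 by linarith)]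
  -- take the first exit time
  have hP : ∃ m, k ≤ m ∧ 1/4 < x m := hex
  obtain ⟨hkN, hxN⟩ := Nat.find_spec hP
  have hkltN : k < Nat.find hP := by
    rcases lt_or_eq_of_le hkN with h | h
    · exact h
    · exfalso; rw [← h] at hxN; linarith
  obtain ⟨n, hNn⟩ : ∃ n, Nat.find hP = n + 1 := ⟨Nat.find hP - 1, by omega⟩
  rw [hNn] at hxN
  have hkn : k ≤ n := by omega
  have hgoodn : ∀ j, k ≤ j → j ≤ n → x j ≤ 1/4 := by
    intro j hj hj'
    have hjN : j < Nat.find hP := by omega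
    have := Nat.find_min hP hjN
    rw [not_and_or] at this
    rcases this with h | h
    · exact absurd hj h
    · linarith [not_lt.mp h]
  obtain ⟨hvn, _⟩ := pers n hkn hgoodn
  have hn1 : 1 ≤ n := by omega
  have hnR : (3:ℝ) ≤ (n:ℝ) := le_trans hkR (by exact_mod_cast hkn)
  have hxn : x n ≤ 1/4 := hgoodn n hkn le_rfl
  have hrn := hrec n hn1
  rw [hvn] at hrn
  have hd : (0:ℝ) < (n:ℝ) + 2 := by linarith
  have hstep : x (n+1) * ((n:ℝ)+2) = (n:ℝ) * x n + 2 := by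
    rw [hrn]; field_simp; try ring
  have hlow : -(1/4) ≤ x n := by nlinarith [hstep, hxN, hnR]
  have hflip := hv n hn1
  rw [if_pos ⟨lt_of_lt_of_le hxN (le_abs_self _), abs_le.mpr ⟨hlow, hxn⟩⟩, hvn] at hflip
  have hup : x (n+1) ≤ 2 := by nlinarith [hstep, hxn, hnR]
  exact ⟨n+1, by omega, hflip, le_of_lt hxN, hup⟩

theorem open_loop_counterexample_crossings (B V : ℕ → ℝ × ℝ)
    (hB0 : B 0 = ((0 : ℝ), (1 : ℝ)))
    (hB1 : B 1 = ((-2 : ℝ), (1/4 : ℝ)))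
    (hV0 : V 0 = ((-2 : ℝ), (1/4 : ℝ)))
    (hV1 : V 1 = ((1 : ℝ), (0 : ℝ)))
    (hBrec : ∀ k : ℕ, 1 ≤ k →
      B (k + 1) = (1 - 2 / ((k : ℝ) + 2)) • B k + (2 / ((k : ℝ) + 2)) • V k)
    (hVrec : ∀ k : ℕ, 1 ≤ k →
      V (k + 1) = if 1/4 < |(B (k + 1)).1| ∧ |(B k).1| ≤ 1/4 then -V k else V k) :
    {k : ℕ | (B k).1 ≤ -1/4}.Infinite ∧ {k : ℕ | 1/4 ≤ (B k).1}.Infinite ∧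
      ¬ ∃ l : ℝ × ℝ, Filter.Tendsto B Filter.atTop (nhds l) := by
  set x : ℕ → ℝ := fun k => (B k).1 with hx
  set v : ℕ → ℝ := fun k => (V k).1 with hvdef
  have hrec : ∀ k : ℕ, 1 ≤ k →
      x (k+1) = (1 - 2/((k:ℝ)+2)) * x k + (2/((k:ℝ)+2)) * v k := by
    intro k hk
    show (B (k+1)).1 = _
    rw [hBrec k hk]
    simp [Prod.smul_def]
    rfl
  have hv : ∀ k : ℕ, 1 ≤ k →
      v (k+1) = if 1/4 < |x (k+1)| ∧ |x k| ≤ 1/4 then -v k else v k := by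
    intro k hk
    show (V (k+1)).1 = _
    rw [hVrec k hk]
    split_ifs with h
    · rfl
    · rfl
  have hx1 : x 1 = -2 := by simp [hx, hB1]
  have hv1 : v 1 = 1 := by simp [hvdef, hV1]
  have hx2 : x 2 = 0 := by
    have := hrec 1 le_rfl
    rw [hx1, hv1] at this
    push_cast at this
    rw [this]; norm_num
  have hv2 : v 2 = 1 := by
    have := hv 1 le_rfl
    rw [hx2, hx1, hv1] at this
    norm_num at this
    exact this
  have hx3 : x 3 = 1/2 := by
    have := hrec 2 (by norm_num)
    rw [hx2, hv2] at this
    push_cast at this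
    rw [this]; norm_num
  have hv3 : v 3 = -1 := by
    have := hv 2 (by norm_num)
    rw [hx3, hx2, hv2,
      show |(1:ℝ)/2| = 1/2 from abs_of_pos (by norm_num)] at this
    norm_num at this
    exact this
  -- from state B (v = -1, 1/4 ≤ x ≤ 2) reach a point with x ≤ -1/4 and state A
  have stepB : ∀ m, 3 ≤ m → v m = -1 → 1/4 ≤ x m → x m ≤ 2 →
      ∃ m', m < m' ∧ v m' = 1 ∧ x m' ≤ -(1/4) ∧ -2 ≤ x m' := by
    intro m hm hvm hxm hxm2
    obtain ⟨m', h1, h2, h3, h4⟩ := main_escape (fun j => -x j) (fun j => -v j)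
      (fun j hj => by
        show -x (j+1) = (1 - 2/((j:ℝ)+2)) * (-x j) + (2/((j:ℝ)+2)) * (-v j)
        rw [hrec j hj]; ring)
      (fun j hj => by
        show -v (j+1) = if 1/4 < |-x (j+1)| ∧ |-x j| ≤ 1/4 then -(-v j) else -v j
        rw [abs_neg, abs_neg, hv j hj]
        split_ifs with h <;> rfl)
      m hm (show -v m = 1 by rw [hvm]; norm_num)
      (show -2 ≤ -x m by linarith) (show -x m ≤ 1/4 by linarith)
    have h2' : -v m' = -1 := h2
    have h3' : 1/4 ≤ -x m' := h3
    have h4' : -x m' ≤ 2 := h4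
    exact ⟨m', h1, by linarith, by linarith, by linarith⟩
  -- from state A reach state B
  have stepA : ∀ m, 3 ≤ m → v m = 1 → x m ≤ -(1/4) → -2 ≤ x m →
      ∃ m', m < m' ∧ v m' = -1 ∧ 1/4 ≤ x m' ∧ x m' ≤ 2 := by
    intro m hm hvm hxm hxm2
    exact main_escape x v hrec hv m hm hvm hxm2 (by linarith)
  -- infinitely many state-B times
  have stateB : ∀ n : ℕ, ∃ m, n ≤ m ∧ 3 ≤ m ∧ v m = -1 ∧ 1/4 ≤ x m ∧ x m ≤ 2 := by
    intro n
    induction n with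
    | zero => exact ⟨3, by omega, le_rfl, hv3, by rw [hx3]; norm_num, by rw [hx3]; norm_num⟩
    | succ n IH =>
      obtain ⟨m, hnm, hm3, hvm, hxm, hxm2⟩ := IH
      obtain ⟨m', hmm', hvm', hxm', hxm'2⟩ := stepB m hm3 hvm hxm hxm2
      obtain ⟨m'', hm'm'', hvm'', hxm'', hxm''2⟩ :=
        stepA m' (by omega) hvm' hxm' hxm'2
      exact ⟨m'', by omega, by omega, hvm'', hxm'', hxm''2⟩
  have freqR : ∀ n : ℕ, ∃ m, n ≤ m ∧ 1/4 ≤ x m := by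
    intro n
    obtain ⟨m, hnm, _, _, hxm, _⟩ := stateB n
    exact ⟨m, hnm, hxm⟩
  have freqL : ∀ n : ℕ, ∃ m, n ≤ m ∧ x m ≤ -(1/4) := by
    intro n
    obtain ⟨m, hnm, hm3, hvm, hxm, hxm2⟩ := stateB n
    obtain ⟨m', hmm', _, hxm', _⟩ := stepB m hm3 hvm hxm hxm2
    exact ⟨m', by omega, hxm'⟩
  have hfreqL : ∃ᶠ m in Filter.atTop, x m ≤ -(1/4) :=
    Filter.frequently_atTop.mpr (fun a => by obtain ⟨m, h1, h2⟩ := freqL a; exact ⟨m, h1, h2⟩)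
  have hfreqR : ∃ᶠ m in Filter.atTop, 1/4 ≤ x m :=
    Filter.frequently_atTop.mpr (fun a => by obtain ⟨m, h1, h2⟩ := freqR a; exact ⟨m, h1, h2⟩)
  refine ⟨?_, ?_, ?_⟩
  · have : {k : ℕ | x k ≤ -(1/4)}.Infinite := by
      rw [← Nat.frequently_atTop_iff_infinite]
      exact hfreqL
    convert this using 2
    norm_num
    rfl
  · rw [← Nat.frequently_atTop_iff_infinite]
    exact hfreqR
  · rintro ⟨l, hl⟩
    have hlx : Filter.Tendsto x Filter.atTop (nhds l.1) :=
      (continuous_fst.tendsto l).comp hl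
    have h1 : l.1 ∈ Set.Iic (-(1/4) : ℝ) :=
      isClosed_Iic.mem_of_frequently_of_tendsto hfreqL hlx
    have h2 : l.1 ∈ Set.Ici ((1/4) : ℝ) :=
      isClosed_Ici.mem_of_frequently_of_tendsto hfreqR hlx
    simp only [Set.mem_Iic, Set.mem_Ici] at h1 h2
    linarith
end
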